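/- Let (d_{n,k}) = (g; f_1,…,f_ℓ) be a multiple Riordan array and h an ℓ-th root of f_1⋯f_ℓ. There exists a unique A = Σ_{j≥0} a_j t^{ℓj} ∈ K[[t]] supported on exponents divisible by ℓ such that t^ℓ·A(h) = h^ℓ (equivalently A(t) = t^ℓ/h̄(t)^ℓ, where h̄ is the compositional inverse of h). For this A-sequence (a_j), one has d_{n,k} = Σ_{j=0}^{n} a_j d_{n−ℓ, k+(j−1)ℓ} for all n ≥ ℓ and k ≥ ℓ (terms whose column index exceeds the row index are zero). -/

import Mathlib

open PowerSeries Finset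

/-- Formal substitution `F(u)`: for `u` with zero constant term, the `n`-th coefficient of
`F(u)` is `∑_{k ≤ n} F_k · [t^n] u^k`. -/
noncomputable def psComp {K : Type*} [CommRing K] (F u : K⟦X⟧) : K⟦X⟧ :=
  PowerSeries.mk fun n => ∑ k ∈ Finset.range (n + 1), coeff k F * coeff n (u ^ k)

/-- Entry `d_{n,k}` of the multiple Riordan array `(g; f_0, …, f_{ℓ-1})`: the `k`-th column,
`k = qℓ + m`, has generating function `g · f_0⋯f_{m-1} · (f_0⋯f_{ℓ-1})^q`. -/
noncomputable def mrEntry {K : Type*} [CommRing K] (ℓ : ℕ) (g : K⟦X⟧) (f : ℕ → K⟦X⟧)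
    (n k : ℕ) : K :=
  coeff n (g * (∏ i ∈ Finset.range (k % ℓ), f i) * (∏ i ∈ Finset.range ℓ, f i) ^ (k / ℓ))

section Aux

variable {K : Type*} [Field K]

lemma coeff_mul_pow_lt (h G : K⟦X⟧) (h0 : constantCoeff h = 0) {m k : ℕ}
    (hmk : m < k) : coeff m (G * h ^ k) = 0 := by
  have hd : (X : K⟦X⟧) ^ k ∣ G * h ^ k :=
    Dvd.dvd.mul_left (pow_dvd_pow_of_dvd (PowerSeries.X_dvd_iff.mpr h0) k) G
  exact PowerSeries.X_pow_dvd_iff.mp hd m hmk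

lemma coeff_pow_lt (h : K⟦X⟧) (h0 : constantCoeff h = 0) {m k : ℕ}
    (hmk : m < k) : coeff m (h ^ k) = 0 := by
  have := coeff_mul_pow_lt h 1 h0 hmk; rwa [one_mul] at this

lemma coeff_pow_self (h : K⟦X⟧) (h0 : constantCoeff h = 0) (k : ℕ) :
    coeff k (h ^ k) = (coeff 1 h) ^ k := by
  induction k with
  | zero => simp
  | succ k ih =>
    rw [pow_succ, mul_comm, PowerSeries.coeff_mul]
    rw [Finset.sum_eq_single (1, k)]
    · rw [ih, pow_succ, mul_comm]
    · rintro ⟨p1, p2⟩ hp hne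
      rw [Finset.HasAntidiagonal.mem_antidiagonal] at hp
      simp only at hp ⊢
      rcases lt_trichotomy p2 k with hlt | heq | hgt
      · rw [coeff_pow_lt h h0 hlt, mul_zero]
      · exfalso; apply hne; subst heq
        have : p1 = 1 := by omega
        simp [this]
      · have hp1 : p1 = 0 := by omega
        subst hp1
        rw [show (coeff 0) h = 0 by rwa [PowerSeries.coeff_zero_eq_constantCoeff], zero_mul]
    · intro habs; exact absurd (Finset.HasAntidiagonal.mem_antidiagonal.mpr (by omega)) habs

lemma pow_mod_support (ℓ : ℕ) (hℓ : 2 ≤ ℓ) (h : K⟦X⟧)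
    (hhs : ∀ n, n % ℓ ≠ 1 → coeff n h = 0) (k : ℕ) :
    ∀ m, m % ℓ ≠ k % ℓ → coeff m (h ^ k) = 0 := by
  induction k with
  | zero =>
    intro m hm
    rw [pow_zero, PowerSeries.coeff_one, if_neg]
    rintro rfl
    simp at hm
  | succ k ih =>
    intro m hm
    rw [pow_succ, mul_comm, PowerSeries.coeff_mul]
    apply Finset.sum_eq_zero
    rintro ⟨p1, p2⟩ hp
    rw [Finset.HasAntidiagonal.mem_antidiagonal] at hp
    simp only at hp ⊢
    by_cases h1 : p1 % ℓ = 1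
    · by_cases h2 : p2 % ℓ = k % ℓ
      · exfalso
        apply hm
        have : m % ℓ = (p1 % ℓ + p2 % ℓ) % ℓ := by rw [← Nat.add_mod, hp]
        rw [h1, h2] at this
        rw [this]
        conv_rhs => rw [Nat.add_mod, Nat.one_mod_eq_one.mpr (by omega), Nat.add_comm]
      · rw [ih p2 h2, mul_zero]
    · rw [hhs p1 h1, zero_mul]

lemma coeff_mul_psComp (h A G : K⟦X⟧) (h0 : constantCoeff h = 0) (N : ℕ) :
    coeff N (G * psComp A h) = ∑ k ∈ Finset.range (N+1), coeff k A * coeff N (G * h^k) := by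
  rw [PowerSeries.coeff_mul]
  have step : ∀ p ∈ antidiagonal N,
      coeff p.1 G * coeff p.2 (psComp A h)
        = ∑ k ∈ Finset.range (N+1), coeff k A * (coeff p.1 G * coeff p.2 (h^k)) := by
    intro p hp
    rw [Finset.HasAntidiagonal.mem_antidiagonal] at hp
    have hp2 : p.2 + 1 ≤ N + 1 := by omega
    rw [psComp, PowerSeries.coeff_mk]
    rw [Finset.sum_subset (Finset.range_subset_range.mpr hp2) (by
      intro k hk hk2
      rw [Finset.mem_range] at hk hk2
      rw [coeff_pow_lt h h0 (by omega), mul_zero])]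
    rw [Finset.mul_sum]
    exact Finset.sum_congr rfl fun k _ => by ring
  rw [Finset.sum_congr rfl step, Finset.sum_comm]
  refine Finset.sum_congr rfl fun k _ => ?_
  rw [PowerSeries.coeff_mul, Finset.mul_sum]

lemma coeff_psComp (h A : K⟦X⟧) (h0 : constantCoeff h = 0) (N : ℕ) :
    coeff N (psComp A h) = ∑ k ∈ Finset.range (N+1), coeff k A * coeff N (h^k) := by
  have := coeff_mul_psComp h A 1 h0 N
  simpa using this

lemma sum_range_mul_reindex (ℓ : ℕ) (hℓ : 0 < ℓ) (s : ℕ) (F : ℕ → K)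
    (hF : ∀ k, ¬ ℓ ∣ k → F k = 0) :
    ∑ k ∈ Finset.range (ℓ*s+1), F k = ∑ j ∈ Finset.range (s+1), F (ℓ*j) := by
  rw [show (∑ j ∈ Finset.range (s+1), F (ℓ*j))
      = ∑ k ∈ (Finset.range (s+1)).image (ℓ * ·), F k from
    (Finset.sum_image (fun a _ b _ hab => Nat.eq_of_mul_eq_mul_left hℓ hab)).symm]
  refine (Finset.sum_subset ?_ ?_).symm
  · intro k hk
    simp only [Finset.mem_image, Finset.mem_range] at hk ⊢
    obtain ⟨j, hj, rfl⟩ := hk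
    have := Nat.mul_le_mul_left ℓ (by omega : j ≤ s)
    omega
  · intro k hk hk2
    apply hF
    rintro ⟨j, rfl⟩
    apply hk2
    simp only [Finset.mem_image, Finset.mem_range] at hk ⊢
    exact ⟨j, by rcases Nat.eq_zero_or_pos ℓ with h|h <;> nlinarith [hk], rfl⟩

noncomputable def aseq (ℓ : ℕ) (h : K⟦X⟧) : ℕ → K
  | s => (coeff (ℓ*(s+1)) (h^ℓ)
      - ∑ j ∈ (Finset.range s).attach, aseq ℓ h j.1 * coeff (ℓ*s) (h^(ℓ*j.1)))
      / (coeff 1 h)^(ℓ*s)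
decreasing_by exact Finset.mem_range.mp j.2

lemma aseq_def (ℓ : ℕ) (h : K⟦X⟧) (s : ℕ) :
    aseq ℓ h s = (coeff (ℓ*(s+1)) (h^ℓ)
      - ∑ j ∈ Finset.range s, aseq ℓ h j * coeff (ℓ*s) (h^(ℓ*j)))
      / (coeff 1 h)^(ℓ*s) := by
  rw [aseq, ← Finset.sum_attach (Finset.range s) (fun j => aseq ℓ h j * coeff (ℓ*s) (h^(ℓ*j)))]

lemma aseq_eq (ℓ : ℕ) (h : K⟦X⟧) (h0 : constantCoeff h = 0)
    (hh1 : coeff 1 h ≠ 0) (s : ℕ) :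
    ∑ j ∈ Finset.range (s+1), aseq ℓ h j * coeff (ℓ*s) (h^(ℓ*j))
      = coeff (ℓ*(s+1)) (h^ℓ) := by
  rw [Finset.sum_range_succ, aseq_def ℓ h s, coeff_pow_self h h0 (ℓ*s),
    div_mul_cancel₀ _ (pow_ne_zero _ hh1)]
  ring

end Aux

/-- Existence and uniqueness of the `A`-sequence of a multiple Riordan array, and the
recurrence it induces. -/
theorem stmt10 {K : Type*} [Field K] [CharZero K] (ℓ : ℕ) (hℓ : 2 ≤ ℓ)
    (g : K⟦X⟧) (f : ℕ → K⟦X⟧)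
    (hg : ∀ n, ¬ (ℓ ∣ n) → coeff n g = 0) (hg0 : constantCoeff g ≠ 0)
    (hf : ∀ i < ℓ, ∀ n, n % ℓ ≠ 1 → coeff n (f i) = 0)
    (hf1 : ∀ i < ℓ, coeff 1 (f i) ≠ 0)
    (h : K⟦X⟧) (hhs : ∀ n, n % ℓ ≠ 1 → coeff n h = 0) (hh1 : coeff 1 h ≠ 0)
    (hhl : h ^ ℓ = ∏ i ∈ Finset.range ℓ, f i)
    (d : ℕ → ℕ → K) (hd : ∀ n k, d n k = mrEntry ℓ g f n k) :
    (∃! A : K⟦X⟧, (∀ n, ¬ (ℓ ∣ n) → coeff n A = 0) ∧ X ^ ℓ * psComp A h = h ^ ℓ) ∧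
    ∀ A : K⟦X⟧, (∀ n, ¬ (ℓ ∣ n) → coeff n A = 0) → X ^ ℓ * psComp A h = h ^ ℓ →
      ∀ n k, ℓ ≤ n → ℓ ≤ k →
        d n k = ∑ j ∈ Finset.range (n + 1),
          coeff (ℓ * j) A * d (n - ℓ) (k + j * ℓ - ℓ) := by
  have hℓ0 : 0 < ℓ := by omega
  have h0 : constantCoeff h = 0 := by
    rw [← PowerSeries.coeff_zero_eq_constantCoeff]
    exact hhs 0 (by rw [Nat.zero_mod]; omega)
  -- the candidate A-sequence
  set A0 : K⟦X⟧ := PowerSeries.mk fun n => if ℓ ∣ n then aseq ℓ h (n / ℓ) else 0 with hA0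
  have hA0coeff : ∀ n, coeff n A0 = if ℓ ∣ n then aseq ℓ h (n / ℓ) else 0 := by
    intro n; rw [hA0, PowerSeries.coeff_mk]
  have hA0supp : ∀ n, ¬ (ℓ ∣ n) → coeff n A0 = 0 := by
    intro n hn; rw [hA0coeff, if_neg hn]
  -- key coefficient identity for supported A satisfying partial sums
  -- reindexed psComp coefficient at multiples of ℓ
  have hreidx : ∀ (A : K⟦X⟧), (∀ n, ¬ (ℓ ∣ n) → coeff n A = 0) → ∀ s : ℕ,
      coeff (ℓ*s) (psComp A h)
        = ∑ j ∈ Finset.range (s+1), coeff (ℓ*j) A * coeff (ℓ*s) (h^(ℓ*j)) := by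
    intro A hsupp s
    rw [coeff_psComp h A h0 (ℓ*s)]
    exact sum_range_mul_reindex ℓ hℓ0 s _ (fun k hk => by rw [hsupp k hk, zero_mul])
  -- coefficient of psComp A0 h
  have hkey : ∀ m : ℕ, coeff m (psComp A0 h) = coeff (m + ℓ) (h ^ ℓ) := by
    intro m
    by_cases hdvd : ℓ ∣ m
    · obtain ⟨s, rfl⟩ := hdvd
      rw [hreidx A0 hA0supp s]
      have : ∀ j ∈ Finset.range (s+1), coeff (ℓ*j) A0 * coeff (ℓ*s) (h^(ℓ*j))
          = aseq ℓ h j * coeff (ℓ*s) (h^(ℓ*j)) := by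
        intro j _
        rw [hA0coeff, if_pos ⟨j, rfl⟩, Nat.mul_div_cancel_left j hℓ0]
      rw [Finset.sum_congr rfl this, aseq_eq ℓ h h0 hh1 s, Nat.mul_succ]
    · have hrhs : coeff (m + ℓ) (h ^ ℓ) = 0 := by
        apply pow_mod_support ℓ hℓ h hhs
        rw [Nat.add_mod_right, Nat.mod_self]
        intro hc
        exact hdvd (Nat.dvd_of_mod_eq_zero hc)
      rw [hrhs, coeff_psComp h A0 h0]
      apply Finset.sum_eq_zero
      intro k _
      by_cases hk : ℓ ∣ k
      · rw [pow_mod_support ℓ hℓ h hhs k m (by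
          obtain ⟨j, rfl⟩ := hk
          rw [Nat.mul_mod_right]
          intro hc
          exact hdvd (Nat.dvd_of_mod_eq_zero hc)), mul_zero]
      · rw [hA0supp k hk, zero_mul]
  have hA0eq : X ^ ℓ * psComp A0 h = h ^ ℓ := by
    ext n
    rcases lt_or_ge n ℓ with hn | hn
    · rw [PowerSeries.X_pow_dvd_iff.mp (Dvd.intro _ rfl) n hn,
        coeff_pow_lt h h0 hn]
    · obtain ⟨m, rfl⟩ := Nat.exists_eq_add_of_le hn
      rw [Nat.add_comm ℓ m, PowerSeries.coeff_X_pow_mul, hkey m]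
  -- uniqueness
  have huniq : ∀ B : K⟦X⟧, (∀ n, ¬ (ℓ ∣ n) → coeff n B = 0) ∧ X ^ ℓ * psComp B h = h ^ ℓ →
      B = A0 := by
    rintro B ⟨hBsupp, hBeq⟩
    have hX : (X : K⟦X⟧) ^ ℓ ≠ 0 := pow_ne_zero _ PowerSeries.X_ne_zero
    have hps : psComp B h = psComp A0 h :=
      mul_left_cancel₀ hX (by rw [hBeq, hA0eq])
    ext n
    induction n using Nat.strong_induction_on with
    | _ n ih =>
      by_cases hdvd : ℓ ∣ n
      · obtain ⟨s, rfl⟩ := hdvd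
        have e : coeff (ℓ*s) (psComp B h) = coeff (ℓ*s) (psComp A0 h) := by rw [hps]
        rw [hreidx B hBsupp s, hreidx A0 hA0supp s, Finset.sum_range_succ,
          Finset.sum_range_succ] at e
        have hsame : ∀ j ∈ Finset.range s,
            coeff (ℓ*j) B * coeff (ℓ*s) (h^(ℓ*j))
              = coeff (ℓ*j) A0 * coeff (ℓ*s) (h^(ℓ*j)) := by
          intro j hj
          rw [Finset.mem_range] at hj
          rw [ih (ℓ*j) (by exact (Nat.mul_lt_mul_left hℓ0).mpr hj)]
        rw [Finset.sum_congr rfl hsame] at e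
        have e2 : coeff (ℓ*s) B * coeff (ℓ*s) (h^(ℓ*s))
            = coeff (ℓ*s) A0 * coeff (ℓ*s) (h^(ℓ*s)) := by
          exact add_left_cancel e
        have hc : coeff (ℓ*s) (h^(ℓ*s)) ≠ 0 := by
          rw [coeff_pow_self h h0]
          exact pow_ne_zero _ hh1
        exact mul_right_cancel₀ hc e2
      · rw [hBsupp n hdvd, hA0supp n hdvd]
  constructor
  · exact ⟨A0, ⟨hA0supp, hA0eq⟩, huniq⟩
  -- the recurrence
  · intro A hAsupp hAeq n k hn hk
    set P : K⟦X⟧ := ∏ i ∈ Finset.range ℓ, f i with hP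
    set Pm : K⟦X⟧ := ∏ i ∈ Finset.range (k % ℓ), f i with hPm
    set q : ℕ := k / ℓ with hq
    have hq1 : 1 ≤ q := Nat.one_le_div_iff hℓ0 |>.mpr hk
    set G : K⟦X⟧ := g * Pm * P ^ (q - 1) with hG
    set N : ℕ := n - ℓ with hN
    -- entries of row n - ℓ
    have hdrow : ∀ j : ℕ, d (n - ℓ) (k + j * ℓ - ℓ) = coeff N (G * h ^ (ℓ*j)) := by
      intro j
      have e1 : k + j * ℓ - ℓ = (k - ℓ) + j * ℓ := by omega
      have e2 : (k - ℓ) % ℓ = k % ℓ := by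
        conv_rhs => rw [show k = (k - ℓ) + ℓ by omega]
        rw [Nat.add_mod_right]
      have e3 : k / ℓ = (k - ℓ) / ℓ + 1 := by
        conv_lhs => rw [show k = (k - ℓ) + ℓ by omega]
        rw [Nat.add_div_right _ hℓ0]
      have e4 : (k + j * ℓ - ℓ) % ℓ = k % ℓ := by
        rw [e1, Nat.add_mul_mod_self_right, e2]
      have e5 : (k + j * ℓ - ℓ) / ℓ = q - 1 + j := by
        rw [e1, Nat.add_mul_div_right _ _ hℓ0, hq, e3]
        omega
      rw [hd, mrEntry, e4, e5, ← hN, ← hP, ← hPm]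
      congr 1
      rw [pow_mul, hhl, hG, pow_add]
      ring
    -- main computation
    have hstart : d n k = coeff N (G * psComp A h) := by
      rw [hd, mrEntry, ← hP, ← hPm, ← hq]
      have hq' : P ^ q = P ^ (q - 1) * P := by
        rw [← pow_succ]
        congr 1
        omega
      have : g * Pm * P ^ q = X ^ ℓ * (G * psComp A h) := by
        rw [hG, hq', ← hhl, ← hAeq]
        ring
      rw [this, show n = N + ℓ by omega, PowerSeries.coeff_X_pow_mul]
    rw [hstart, coeff_mul_psComp h A G h0 N]
    -- extend the sum to range (ℓ*n + 1)
    have hext : ∑ k' ∈ Finset.range (N+1), coeff k' A * coeff N (G * h^k')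
        = ∑ k' ∈ Finset.range (ℓ*n+1), coeff k' A * coeff N (G * h^k') := by
      apply Finset.sum_subset (Finset.range_subset_range.mpr (by
        have := Nat.le_mul_of_pos_left n hℓ0
        omega))
      intro k' hk' hk'2
      rw [Finset.mem_range] at hk' hk'2
      rw [coeff_mul_pow_lt h G h0 (by omega), mul_zero]
    rw [hext, sum_range_mul_reindex ℓ hℓ0 n _
      (fun k' hk' => by rw [hAsupp k' hk', zero_mul])]
    exact Finset.sum_congr rfl fun j _ => by rw [hdrow j]
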